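/- Let N ≥ 1, n ≥ 1 and let f: {0,1}^n → {0,1} be almost balanced. Then for every allowed input string (u,v), the biased system P⁰ boosts the probability that f evaluates to 0 by at least (2/(3n))·sin²(π/(4N)): Σ_{x: f(x)=0} Σ_{y∈{0,1}^n} P⁰(x,y|u,v) ≥ Σ_{x: f(x)=0} Σ_{y∈{0,1}^n} P(x,y|u,v) + (2/(3n))·sin²(π/(4N)). -/

import Mathlib

open Finset

/-- `sin²(π/(4N))`. -/
noncomputable def s2 (N : ℕ) : ℝ := Real.sin (Real.pi / (4 * N)) ^ 2

/-- `cos²(π/(4N))`. -/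
noncomputable def c2 (N : ℕ) : ℝ := Real.cos (Real.pi / (4 * N)) ^ 2

/-- The set `G_N` of allowed input pairs: `u ∈ U = {0,2,...,2N-2}`,
`v ∈ V = {1,3,...,2N-1}`, and either `|u-v| = 1` or `(u,v) = (0,2N-1)`. -/
def Allowed (N u v : ℕ) : Prop :=
  Even u ∧ u < 2 * N ∧ Odd v ∧ v < 2 * N ∧
    (v = u + 1 ∨ u = v + 1 ∨ (u = 0 ∧ v = 2 * N - 1))

/-- The single quantum box `Q(x,y|u,v)`: on the input pair `(0,2N-1)` it equals
`sin²(π/(4N))/2` if `x = y` and `cos²(π/(4N))/2` otherwise; on the input pairs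
with `|u-v| = 1` it equals `cos²(π/(4N))/2` if `x = y` and `sin²(π/(4N))/2`
otherwise. -/
noncomputable def Qbox (N : ℕ) (x y : Bool) (u v : ℕ) : ℝ :=
  if u = 0 ∧ v = 2 * N - 1 then (if x = y then s2 N / 2 else c2 N / 2)
  else (if x = y then c2 N / 2 else s2 N / 2)

/-- The allowed input pairs `(u,v) ∈ G_N` with `|u-v| = 1`, as a finite set. -/
def adjPairs (N : ℕ) : Finset (ℕ × ℕ) :=
  (Finset.range (2 * N) ×ˢ Finset.range (2 * N)).filter
    fun p => Even p.1 ∧ Odd p.2 ∧ (p.2 = p.1 + 1 ∨ p.1 = p.2 + 1)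

/-- The chained Bell value
`I_N(R) = R(0,0|0,2N-1) + R(1,1|0,2N-1) + Σ_{(u,v)∈G_N, |u-v|=1} (R(0,1|u,v) + R(1,0|u,v))`. -/
noncomputable def IBell (N : ℕ) (R : Bool → Bool → ℕ → ℕ → ℝ) : ℝ :=
  R false false 0 (2 * N - 1) + R true true 0 (2 * N - 1) +
    ∑ p ∈ adjPairs N, (R false true p.1 p.2 + R true false p.1 p.2)

/-- The biased boxes: `Qbias N false = Q⁰` is biased towards `x = 0` and
`Qbias N true = Q¹` is biased towards `x = 1`, each by shifting probability
`sin²(π/(4N))/2` within every row. -/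
noncomputable def Qbias (N : ℕ) (σ : Bool) (x y : Bool) (u v : ℕ) : ℝ :=
  if x = σ then Qbox N x y u v + s2 N / 2 else Qbox N x y u v - s2 N / 2


/-- `π⁰(s)` for the prefix `s = x_1…x_k`: the fraction, among strings
`z ∈ {0,1}^n` having `x_1…x_k` as a prefix, of those with `f(z) = 0`. -/
noncomputable def piz {n : ℕ} (f : (Fin n → Bool) → Bool) (k : ℕ)
    (x : Fin n → Bool) : ℝ :=
  ((Finset.univ.filter fun z : Fin n → Bool =>
      (∀ j : Fin n, (j : ℕ) < k → z j = x j) ∧ f z = false).card : ℝ) / 2 ^ (n - k)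

/-- `Δ_i(x_1…x_{i-1}) = |π⁰(x_1…x_{i-1}0) - π⁰(x_1…x_{i-1}1)|` (the index `i`
is 0-based here, so the prefix consists of the coordinates `j < i`). -/
noncomputable def Del {n : ℕ} (f : (Fin n → Bool) → Bool) (i : Fin n)
    (x : Fin n → Bool) : ℝ :=
  |piz f ((i : ℕ) + 1) (Function.update x i false) -
    piz f ((i : ℕ) + 1) (Function.update x i true)|

/-- `f` is almost balanced: `|Pr_x[f(x)=0] - Pr_x[f(x)=1]| ≤ 1/3` over
uniformly random `x ∈ {0,1}^n`. -/
def AlmostBalanced {n : ℕ} (f : (Fin n → Bool) → Bool) : Prop :=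
  |((Finset.univ.filter fun x : Fin n → Bool => f x = false).card : ℝ) / 2 ^ n -
    ((Finset.univ.filter fun x : Fin n → Bool => f x = true).card : ℝ) / 2 ^ n| ≤ 1 / 3

open Classical in
/-- The pivotal index `i(x)`: the least `i` with `Δ_i(x_1…x_{i-1}) ≥ 2/(3n)`
(junk value if none exists). -/
noncomputable def pivot {n : ℕ} (hn : 0 < n) (f : (Fin n → Bool) → Bool)
    (x : Fin n → Bool) : Fin n :=
  (Fin.find? fun i : Fin n => decide (Del f i x ≥ 2 / (3 * n))).getD ⟨0, hn⟩

/-- The bias direction `σ(x)`: `0` if `π⁰(x_1…x_{i(x)-1}0) > π⁰(x_1…x_{i(x)-1}1)`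
and `1` otherwise. -/
noncomputable def sig {n : ℕ} (hn : 0 < n) (f : (Fin n → Bool) → Bool)
    (x : Fin n → Bool) : Bool :=
  if piz f ((pivot hn f x : ℕ) + 1) (Function.update x (pivot hn f x) false) >
      piz f ((pivot hn f x : ℕ) + 1) (Function.update x (pivot hn f x) true)
  then false else true


/-- An allowed input string: componentwise allowed input pairs `(u_j, v_j) ∈ G_N`. -/
def AllowedStr (N : ℕ) {n : ℕ} (u v : Fin n → ℕ) : Prop :=
  ∀ j : Fin n, Allowed N (u j) (v j)

/-- The `n`-fold product quantum system
`P(x,y|u,v) = ∏_j Q(x_j,y_j|u_j,v_j)`. -/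
noncomputable def Pprod (N : ℕ) {n : ℕ} (x y : Fin n → Bool) (u v : Fin n → ℕ) : ℝ :=
  ∏ j : Fin n, Qbox N (x j) (y j) (u j) (v j)

/-- The biased `n`-box systems: `Pbias N hn f false = P⁰` biases the pivotal
subsystem of `x` in direction `σ(x)`, and `Pbias N hn f true = P¹` biases it
in direction `1 - σ(x)`; all the non-pivotal subsystems are the unbiased `Q`. -/
noncomputable def Pbias (N : ℕ) {n : ℕ} (hn : 0 < n) (f : (Fin n → Bool) → Bool)
    (flip : Bool) (x y : Fin n → Bool) (u v : Fin n → ℕ) : ℝ :=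
  Qbias N (xor (sig hn f x) flip) (x (pivot hn f x)) (y (pivot hn f x))
      (u (pivot hn f x)) (v (pivot hn f x)) *
    ∏ j ∈ Finset.univ.erase (pivot hn f x), Qbox N (x j) (y j) (u j) (v j)



/-! ### Auxiliary lemmas -/

section Aux

open Finset

lemma s2_add_c2 (N : ℕ) : s2 N + c2 N = 1 := Real.sin_sq_add_cos_sq _

lemma sum_Qbox (N : ℕ) (x : Bool) (u v : ℕ) : ∑ b : Bool, Qbox N x b u v = 1 / 2 := by
  have h := s2_add_c2 N
  rw [Fintype.sum_bool]
  unfold Qbox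
  cases x <;> split_ifs <;> simp_all <;> linarith

lemma sum_Qbias (N : ℕ) (σ x : Bool) (u v : ℕ) :
    ∑ b : Bool, Qbias N σ x b u v = 1 / 2 + (if x = σ then s2 N else - s2 N) := by
  have h := sum_Qbox N x u v
  rw [Fintype.sum_bool] at h ⊢
  unfold Qbias
  by_cases hx : x = σ
  · subst hx
    simp only [if_pos rfl, if_true]
    simp
    linarith
  · simp only [if_neg hx]
    simp [hx]
    linarith

lemma piz_congr {n : ℕ} (f : (Fin n → Bool) → Bool) (k : ℕ) {x x' : Fin n → Bool}
    (h : ∀ j : Fin n, (j : ℕ) < k → x j = x' j) : piz f k x = piz f k x' := by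
  have hset : (univ.filter fun z : Fin n → Bool =>
      (∀ j : Fin n, (j : ℕ) < k → z j = x j) ∧ f z = false)
      = (univ.filter fun z : Fin n → Bool =>
      (∀ j : Fin n, (j : ℕ) < k → z j = x' j) ∧ f z = false) := by
    apply Finset.filter_congr
    intro z _
    constructor
    · rintro ⟨h1, h2⟩; exact ⟨fun j hj => (h1 j hj).trans (h j hj), h2⟩
    · rintro ⟨h1, h2⟩; exact ⟨fun j hj => (h1 j hj).trans (h j hj).symm, h2⟩
  unfold piz
  rw [hset]

lemma prefix_succ_iff {n : ℕ} (i : Fin n) (x z : Fin n → Bool) (b : Bool) :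
    (∀ j : Fin n, (j : ℕ) < (i : ℕ) + 1 → z j = Function.update x i b j) ↔
      ((∀ j : Fin n, (j : ℕ) < (i : ℕ) → z j = x j) ∧ z i = b) := by
  constructor
  · intro h
    refine ⟨fun j hj => ?_, ?_⟩
    · have hne : j ≠ i := fun e => by subst e; omega
      have := h j (by omega)
      rwa [Function.update_of_ne hne] at this
    · have := h i (by omega)
      rwa [Function.update_self] at this
  · rintro ⟨h1, h2⟩ j hj
    rcases Nat.lt_succ_iff_lt_or_eq.mp hj with hj' | hj'
    · have hne : j ≠ i := fun e => by subst e; omega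
      rw [Function.update_of_ne hne]
      exact h1 j hj'
    · have hji : j = i := Fin.ext hj'
      subst hji
      rwa [Function.update_self]

lemma card_split {n : ℕ} (f : (Fin n → Bool) → Bool) (i : Fin n) (x : Fin n → Bool) :
    (univ.filter fun z : Fin n → Bool =>
        (∀ j : Fin n, (j : ℕ) < (i : ℕ) → z j = x j) ∧ f z = false).card
      = (univ.filter fun z : Fin n → Bool =>
          (∀ j : Fin n, (j : ℕ) < (i : ℕ) + 1 → z j = Function.update x i false j)
            ∧ f z = false).card
        + (univ.filter fun z : Fin n → Bool =>
          (∀ j : Fin n, (j : ℕ) < (i : ℕ) + 1 → z j = Function.update x i true j)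
            ∧ f z = false).card := by
  classical
  have h1 : ∀ b : Bool, (univ.filter fun z : Fin n → Bool =>
        (∀ j : Fin n, (j : ℕ) < (i : ℕ) + 1 → z j = Function.update x i b j) ∧ f z = false)
      = ((univ.filter fun z : Fin n → Bool =>
          (∀ j : Fin n, (j : ℕ) < (i : ℕ) → z j = x j) ∧ f z = false).filter
            fun z => z i = b) := by
    intro b
    rw [Finset.filter_filter]
    apply Finset.filter_congr
    intro z _
    rw [prefix_succ_iff]
    tauto
  rw [h1 false, h1 true]
  have := Finset.card_filter_add_card_filter_not
    (s := univ.filter fun z : Fin n → Bool =>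
      (∀ j : Fin n, (j : ℕ) < (i : ℕ) → z j = x j) ∧ f z = false)
    (p := fun z => z i = false)
  have hneg : ((univ.filter fun z : Fin n → Bool =>
      (∀ j : Fin n, (j : ℕ) < (i : ℕ) → z j = x j) ∧ f z = false).filter
        fun z => ¬ z i = false)
    = ((univ.filter fun z : Fin n → Bool =>
      (∀ j : Fin n, (j : ℕ) < (i : ℕ) → z j = x j) ∧ f z = false).filter
        fun z => z i = true) := Finset.filter_congr fun z _ => by simp
  have hcardneg := congrArg Finset.card hneg
  rw [hcardneg] at this
  linarith

lemma piz_split {n : ℕ} (f : (Fin n → Bool) → Bool) (i : Fin n) (x : Fin n → Bool) :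
    piz f (i : ℕ) x =
      (piz f ((i : ℕ) + 1) (Function.update x i false) +
        piz f ((i : ℕ) + 1) (Function.update x i true)) / 2 := by
  have hin : (i : ℕ) < n := i.isLt
  have hsub : n - (i : ℕ) = (n - ((i : ℕ) + 1)) + 1 := by omega
  unfold piz
  rw [card_split f i x, hsub]
  have hD : (0:ℝ) < 2 ^ (n - ((i : ℕ) + 1)) := by positivity
  push_cast
  rw [pow_succ]
  field_simp

lemma piz_zero {n : ℕ} (f : (Fin n → Bool) → Bool) (x : Fin n → Bool) :
    piz f 0 x = ((univ.filter fun z : Fin n → Bool => f z = false).card : ℝ) / 2 ^ n := by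
  unfold piz
  simp

lemma piz_last {n : ℕ} (f : (Fin n → Bool) → Bool) (x : Fin n → Bool) :
    piz f n x = if f x = false then 1 else 0 := by
  unfold piz
  have hset : (univ.filter fun z : Fin n → Bool =>
      (∀ j : Fin n, (j : ℕ) < n → z j = x j) ∧ f z = false)
      = if f x = false then {x} else ∅ := by
    ext z
    simp only [mem_filter, mem_univ, true_and]
    constructor
    · rintro ⟨h1, h2⟩
      have hz : z = x := funext fun j => h1 j j.isLt
      subst hz
      simp [h2]
    · intro hz
      by_cases hfx : f x = false
      · simp only [hfx, if_true, mem_singleton] at hz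
        subst hz
        exact ⟨fun j _ => rfl, hfx⟩
      · simp [hfx] at hz
  rw [hset]
  by_cases hfx : f x = false <;> simp [hfx]

lemma piz_zero_bounds {n : ℕ} {f : (Fin n → Bool) → Bool} (hf : AlmostBalanced f)
    (x : Fin n → Bool) : 1 / 3 ≤ piz f 0 x ∧ piz f 0 x ≤ 2 / 3 := by
  classical
  rw [piz_zero]
  unfold AlmostBalanced at hf
  have hcard : (univ.filter fun z : Fin n → Bool => f z = false).card
      + (univ.filter fun z : Fin n → Bool => f z = true).card = 2 ^ n := by
    have h0 := Finset.card_filter_add_card_filter_not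
      (s := (univ : Finset (Fin n → Bool))) (p := fun z => f z = false)
    rw [show ((univ : Finset (Fin n → Bool)).filter fun z => ¬ f z = false)
      = ((univ : Finset (Fin n → Bool)).filter fun z => f z = true) from
        Finset.filter_congr fun z _ => by simp] at h0
    rw [h0, Finset.card_univ]
    simp
  have h2n : (0:ℝ) < 2 ^ n := by positivity
  have hsum : ((univ.filter fun z : Fin n → Bool => f z = false).card : ℝ) / 2 ^ n
      + ((univ.filter fun z : Fin n → Bool => f z = true).card : ℝ) / 2 ^ n = 1 := by
    field_simp
    exact_mod_cast hcard
  rw [abs_le] at hf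
  constructor <;> linarith [hf.1, hf.2]

lemma piz_step {n : ℕ} (f : (Fin n → Bool) → Bool) (i : Fin n) (x : Fin n → Bool) :
    |piz f ((i : ℕ) + 1) x - piz f (i : ℕ) x| = Del f i x / 2 := by
  have hx : Function.update x i (x i) = x := Function.update_eq_self i x
  rw [piz_split f i x]
  unfold Del
  set A := piz f ((i : ℕ) + 1) (Function.update x i false) with hA
  set B := piz f ((i : ℕ) + 1) (Function.update x i true) with hB
  cases hb : x i
  · have hAx : piz f ((i : ℕ) + 1) x = A := by rw [hA, ← hb, hx]
    rw [hAx, show A - (A + B) / 2 = (A - B) / 2 from by ring, abs_div, abs_two]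
  · have hBx : piz f ((i : ℕ) + 1) x = B := by rw [hB, ← hb, hx]
    rw [hBx, show B - (A + B) / 2 = (B - A) / 2 from by ring, abs_div, abs_two,
      abs_sub_comm]

lemma exists_pivot {n : ℕ} (hn : 0 < n) {f : (Fin n → Bool) → Bool}
    (hf : AlmostBalanced f) (x : Fin n → Bool) :
    ∃ i : Fin n, Del f i x ≥ 2 / (3 * n) := by
  by_contra hc
  push_neg at hc
  have hnR : (0:ℝ) < n := by exact_mod_cast hn
  have tele : piz f n x - piz f 0 x = ∑ k ∈ Finset.range n, (piz f (k + 1) x - piz f k x) :=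
    (Finset.sum_range_sub (fun k => piz f k x) n).symm
  have habs : |piz f n x - piz f 0 x| ≤ ∑ k ∈ Finset.range n, |piz f (k + 1) x - piz f k x| := by
    rw [tele]; exact Finset.abs_sum_le_sum_abs _ _
  have hlt : ∑ k ∈ Finset.range n, |piz f (k + 1) x - piz f k x| < 1 / 3 := by
    have hterm : ∀ k ∈ Finset.range n, |piz f (k + 1) x - piz f k x| < 1 / (3 * n) := by
      intro k hk
      rw [Finset.mem_range] at hk
      have h1 : |piz f ((⟨k, hk⟩ : Fin n) + 1 : ℕ) x - piz f ((⟨k, hk⟩ : Fin n) : ℕ) x|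
          = Del f ⟨k, hk⟩ x / 2 := piz_step f ⟨k, hk⟩ x
      have h2 := hc ⟨k, hk⟩
      calc |piz f (k + 1) x - piz f k x| = Del f ⟨k, hk⟩ x / 2 := h1
        _ < (2 / (3 * n)) / 2 := by linarith
        _ = 1 / (3 * n) := by ring
    calc ∑ k ∈ Finset.range n, |piz f (k + 1) x - piz f k x|
        < ∑ _k ∈ Finset.range n, 1 / (3 * (n:ℝ)) :=
          Finset.sum_lt_sum_of_nonempty (Finset.nonempty_range_iff.mpr (by omega)) hterm
      _ = 1 / 3 := by
          rw [Finset.sum_const, Finset.card_range, nsmul_eq_mul]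
          field_simp
  have hb := piz_zero_bounds hf x
  rw [piz_last] at habs
  by_cases hfx : f x = false
  · rw [if_pos hfx] at habs
    have := abs_lt.mp (lt_of_le_of_lt habs hlt)
    linarith [hb.2, this.2]
  · rw [if_neg hfx] at habs
    have := abs_lt.mp (lt_of_le_of_lt habs hlt)
    linarith [hb.1, this.1]

open Classical in
lemma pivot_mem {n : ℕ} (hn : 0 < n) {f : (Fin n → Bool) → Bool} (hf : AlmostBalanced f)
    (x : Fin n → Bool) :
    pivot hn f x ∈ Fin.find? (fun i : Fin n => decide (Del f i x ≥ 2 / (3 * n))) := by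
  unfold pivot
  obtain ⟨i, hi⟩ := exists_pivot hn hf x
  rw [Fin.find?_eq_some_find_of_exists (p := fun i : Fin n => decide (Del f i x ≥ 2 / (3 * n)))
    ⟨i, by simpa using hi⟩]
  simp

lemma pivot_spec {n : ℕ} (hn : 0 < n) {f : (Fin n → Bool) → Bool} (hf : AlmostBalanced f)
    (x : Fin n → Bool) : 2 / (3 * n) ≤ Del f (pivot hn f x) x :=
  by simpa using (Fin.mem_find?_iff.mp (pivot_mem hn hf x)).1

lemma pivot_min {n : ℕ} (hn : 0 < n) {f : (Fin n → Bool) → Bool} (hf : AlmostBalanced f)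
    (x : Fin n → Bool) {j : Fin n} (hj : j < pivot hn f x) : Del f j x < 2 / (3 * n) :=
  by simpa using (Fin.mem_find?_iff.mp (pivot_mem hn hf x)).2 j hj

lemma piz_update_congr {n : ℕ} (f : (Fin n → Bool) → Bool) (i : Fin n)
    {x x' : Fin n → Bool} (h : ∀ j : Fin n, (j : ℕ) < (i : ℕ) → x j = x' j) (b : Bool) :
    piz f ((i : ℕ) + 1) (Function.update x i b)
      = piz f ((i : ℕ) + 1) (Function.update x' i b) := by
  apply piz_congr
  intro j hj
  rcases Nat.lt_succ_iff_lt_or_eq.mp hj with hj' | hj'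
  · have hne : j ≠ i := fun e => by subst e; omega
    rw [Function.update_of_ne hne, Function.update_of_ne hne]
    exact h j hj'
  · have hji : j = i := Fin.ext hj'
    subst hji
    rw [Function.update_self, Function.update_self]

lemma Del_congr {n : ℕ} (f : (Fin n → Bool) → Bool) (i : Fin n) {x x' : Fin n → Bool}
    (h : ∀ j : Fin n, (j : ℕ) < (i : ℕ) → x j = x' j) : Del f i x = Del f i x' := by
  unfold Del
  rw [piz_update_congr f i h false, piz_update_congr f i h true]

lemma pivot_congr {n : ℕ} (hn : 0 < n) {f : (Fin n → Bool) → Bool} (hf : AlmostBalanced f)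
    {x x' : Fin n → Bool}
    (h : ∀ j : Fin n, (j : ℕ) < (pivot hn f x : ℕ) → x' j = x j) :
    pivot hn f x' = pivot hn f x := by
  by_contra hne
  rcases lt_or_gt_of_ne hne with hlt | hgt
  · have hcg : Del f (pivot hn f x') x' = Del f (pivot hn f x') x :=
      Del_congr f _ (fun j hj => h j (by
        have : (pivot hn f x' : ℕ) < (pivot hn f x : ℕ) := hlt
        omega))
    have h1 := pivot_spec hn hf x'
    rw [hcg] at h1
    exact absurd h1 (not_le_of_gt (pivot_min hn hf x hlt))
  · have hcg : Del f (pivot hn f x) x' = Del f (pivot hn f x) x :=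
      Del_congr f _ (fun j hj => h j hj)
    have h1 := pivot_spec hn hf x
    rw [← hcg] at h1
    exact absurd h1 (not_le_of_gt (pivot_min hn hf x' hgt))

lemma sig_congr {n : ℕ} (hn : 0 < n) {f : (Fin n → Bool) → Bool} (hf : AlmostBalanced f)
    {x x' : Fin n → Bool}
    (h : ∀ j : Fin n, (j : ℕ) < (pivot hn f x : ℕ) → x' j = x j) :
    sig hn f x' = sig hn f x := by
  unfold sig
  rw [pivot_congr hn hf h,
    piz_update_congr f (pivot hn f x) (fun j hj => h j hj) false,
    piz_update_congr f (pivot hn f x) (fun j hj => h j hj) true]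

/-- The prefix-class map: `kap hn f x` keeps `x` below its pivot and zeroes it out
from the pivot on. Its fibers are the prefix classes. -/
noncomputable def kap {n : ℕ} (hn : 0 < n) (f : (Fin n → Bool) → Bool)
    (x : Fin n → Bool) : Fin n → Bool :=
  fun j => if (j : ℕ) < (pivot hn f x : ℕ) then x j else false

lemma kap_agree {n : ℕ} (hn : 0 < n) (f : (Fin n → Bool) → Bool) (x : Fin n → Bool) :
    ∀ j : Fin n, (j : ℕ) < (pivot hn f x : ℕ) → kap hn f x j = x j :=
  fun _ hj => if_pos hj

lemma pivot_kap {n : ℕ} (hn : 0 < n) {f : (Fin n → Bool) → Bool} (hf : AlmostBalanced f)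
    (x : Fin n → Bool) : pivot hn f (kap hn f x) = pivot hn f x :=
  pivot_congr hn hf (kap_agree hn f x)

lemma kap_idem {n : ℕ} (hn : 0 < n) {f : (Fin n → Bool) → Bool} (hf : AlmostBalanced f)
    (x : Fin n → Bool) : kap hn f (kap hn f x) = kap hn f x := by
  funext j
  by_cases hj : (j : ℕ) < (pivot hn f x : ℕ) <;>
    simp [kap, pivot_kap hn hf x, hj]

lemma kap_eq_iff {n : ℕ} (hn : 0 < n) {f : (Fin n → Bool) → Bool} (hf : AlmostBalanced f)
    {p : Fin n → Bool} (hp : kap hn f p = p) (x : Fin n → Bool) :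
    kap hn f x = p ↔ ∀ j : Fin n, (j : ℕ) < (pivot hn f p : ℕ) → x j = p j := by
  constructor
  · intro hx
    have hpp : pivot hn f p = pivot hn f x := by rw [← hx, pivot_kap hn hf x]
    intro j hj
    rw [hpp] at hj
    rw [← hx]
    exact (kap_agree hn f x j hj).symm
  · intro hx
    have hpp : pivot hn f x = pivot hn f p := pivot_congr hn hf hx
    rw [← hp]
    funext j
    show (if (j : ℕ) < (pivot hn f x : ℕ) then x j else false)
      = (if (j : ℕ) < (pivot hn f p : ℕ) then p j else false)
    rw [hpp]
    by_cases hj : (j : ℕ) < (pivot hn f p : ℕ)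
    · rw [if_pos hj, if_pos hj]; exact hx j hj
    · rw [if_neg hj, if_neg hj]

lemma card_prefix {n : ℕ} (k : ℕ) (hk : k ≤ n) (x : Fin n → Bool) :
    ((univ.filter fun z : Fin n → Bool => ∀ j : Fin n, (j : ℕ) < k → z j = x j).card)
      = 2 ^ (n - k) := by
  classical
  have hset : (univ.filter fun z : Fin n → Bool => ∀ j : Fin n, (j : ℕ) < k → z j = x j)
      = Fintype.piFinset (fun j : Fin n => if (j : ℕ) < k then {x j} else Finset.univ) := by
    ext z
    simp only [mem_filter, mem_univ, true_and, Fintype.mem_piFinset]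
    constructor
    · intro h j
      by_cases hj : (j : ℕ) < k
      · simp [hj, h j hj]
      · simp [hj]
    · intro h j hj
      have := h j
      rw [if_pos hj] at this
      simpa using this
  rw [hset, Fintype.card_piFinset]
  have hfac : ∀ j : Fin n,
      (if (j : ℕ) < k then ({x j} : Finset Bool) else Finset.univ).card
        = if (j : ℕ) < k then 1 else 2 := by
    intro j; split_ifs <;> simp
  rw [Finset.prod_congr rfl (fun j _ => hfac j),
    ← Finset.prod_filter_mul_prod_filter_not univ (fun j : Fin n => (j : ℕ) < k),
    Finset.prod_congr rfl (fun j hj => if_pos (Finset.mem_filter.mp hj).2),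
    Finset.prod_congr rfl (fun j hj => if_neg (Finset.mem_filter.mp hj).2),
    Finset.prod_const_one, Finset.prod_const, one_mul]
  congr 1
  have h2 : (univ.filter fun j : Fin n => (j : ℕ) < k)
      = Finset.attachFin (Finset.range k) (fun m hm => lt_of_lt_of_le (Finset.mem_range.mp hm) hk) := by
    ext j
    simp [Finset.mem_attachFin]
  have h3 := Finset.card_filter_add_card_filter_not
    (s := (univ : Finset (Fin n))) (p := fun j : Fin n => (j : ℕ) < k)
  rw [h2, Finset.card_attachFin, Finset.card_range] at h3
  rw [Finset.card_univ, Fintype.card_fin] at h3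
  omega

lemma filter_piece {n : ℕ} (f : (Fin n → Bool) → Bool) (i : Fin n) (p : Fin n → Bool)
    (b : Bool) :
    (univ.filter fun z : Fin n → Bool =>
        (∀ j : Fin n, (j : ℕ) < (i : ℕ) + 1 → z j = Function.update p i b j) ∧ f z = false)
      = univ.filter fun z : Fin n → Bool =>
          ((∀ j : Fin n, (j : ℕ) < (i : ℕ) → z j = p j) ∧ z i = b) ∧ f z = false := by
  apply Finset.filter_congr
  intro z _
  rw [prefix_succ_iff]

/-- The summand of the counting argument. -/
noncomputable def gfun {n : ℕ} (hn : 0 < n) (f : (Fin n → Bool) → Bool)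
    (x : Fin n → Bool) : ℝ :=
  if f x = false then (if x (pivot hn f x) = sig hn f x then 1 else -1) else 0

lemma sig_del {n : ℕ} (hn : 0 < n) (f : (Fin n → Bool) → Bool) (p : Fin n → Bool) :
    piz f ((pivot hn f p : ℕ) + 1) (Function.update p (pivot hn f p) (sig hn f p)) -
      piz f ((pivot hn f p : ℕ) + 1) (Function.update p (pivot hn f p) (!(sig hn f p)))
      = Del f (pivot hn f p) p := by
  unfold sig Del
  by_cases hc : piz f ((pivot hn f p : ℕ) + 1) (Function.update p (pivot hn f p) false) >
      piz f ((pivot hn f p : ℕ) + 1) (Function.update p (pivot hn f p) true)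
  · rw [if_pos hc]
    simp only [Bool.not_false]
    rw [abs_of_pos (by linarith)]
  · rw [if_neg hc]
    simp only [Bool.not_true]
    push_neg at hc
    rw [abs_of_nonpos (by linarith)]
    ring

lemma fiber_bound {n : ℕ} (hn : 0 < n) {f : (Fin n → Bool) → Bool} (hf : AlmostBalanced f)
    (p : Fin n → Bool) :
    2 / (3 * (n:ℝ)) / 2 * ((univ.filter fun x : Fin n → Bool => kap hn f x = p).card : ℝ)
      ≤ ∑ x ∈ univ.filter (fun x : Fin n → Bool => kap hn f x = p), gfun hn f x := by
  classical
  rcases Finset.eq_empty_or_nonempty (univ.filter fun x : Fin n → Bool => kap hn f x = p)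
    with he | ⟨x0, hx0⟩
  · rw [he]; simp
  have hx0' : kap hn f x0 = p := (Finset.mem_filter.mp hx0).2
  have hpfix : kap hn f p = p := by rw [← hx0']; exact kap_idem hn hf x0
  have hfiber : (univ.filter fun x : Fin n → Bool => kap hn f x = p)
      = univ.filter (fun x : Fin n → Bool =>
          ∀ j : Fin n, (j : ℕ) < (pivot hn f p : ℕ) → x j = p j) :=
    Finset.filter_congr fun x _ => kap_eq_iff hn hf hpfix x
  have hg : ∀ x ∈ univ.filter (fun x : Fin n → Bool =>
      ∀ j : Fin n, (j : ℕ) < (pivot hn f p : ℕ) → x j = p j),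
      gfun hn f x = if f x = false then
        (if x (pivot hn f p) = sig hn f p then (1:ℝ) else -1) else 0 := by
    intro x hx
    have hx' := (Finset.mem_filter.mp hx).2
    have hpiv : pivot hn f x = pivot hn f p := pivot_congr hn hf hx'
    have hsig : sig hn f x = sig hn f p := sig_congr hn hf hx'
    unfold gfun
    rw [hpiv, hsig]
  rw [hfiber, Finset.sum_congr rfl hg]
  -- now express the sum as a difference of two cardinalities
  have hptw : ∀ x : Fin n → Bool,
      (if f x = false then (if x (pivot hn f p) = sig hn f p then (1:ℝ) else -1) else 0)
        = (if f x = false ∧ x (pivot hn f p) = sig hn f p then (1:ℝ) else 0)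
          - (if f x = false ∧ x (pivot hn f p) = !(sig hn f p) then (1:ℝ) else 0) := by
    intro x
    cases hfx : f x <;> cases hxi : x (pivot hn f p) <;> cases hs : sig hn f p <;>
      simp [hfx, hxi, hs]
  rw [Finset.sum_congr rfl (fun x _ => hptw x), Finset.sum_sub_distrib,
    Finset.sum_boole, Finset.sum_boole]
  have hT : ∀ b : Bool, ((univ.filter (fun x : Fin n → Bool =>
        ∀ j : Fin n, (j : ℕ) < (pivot hn f p : ℕ) → x j = p j)).filter
          (fun x => f x = false ∧ x (pivot hn f p) = b)).card
      = ((univ.filter fun z : Fin n → Bool =>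
          (∀ j : Fin n, (j : ℕ) < (pivot hn f p : ℕ) + 1 →
            z j = Function.update p (pivot hn f p) b j) ∧ f z = false)).card := by
    intro b
    rw [Finset.filter_filter, filter_piece]
    congr 1
    apply Finset.filter_congr
    intro z _
    tauto
  rw [hT (sig hn f p), hT (!(sig hn f p))]
  -- relate the cardinalities with `piz`
  have hD : (0:ℝ) < 2 ^ (n - ((pivot hn f p : ℕ) + 1)) := by positivity
  have hcardpiz : ∀ b : Bool, ((univ.filter fun z : Fin n → Bool =>
      (∀ j : Fin n, (j : ℕ) < (pivot hn f p : ℕ) + 1 →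
        z j = Function.update p (pivot hn f p) b j) ∧ f z = false).card : ℝ)
      = piz f ((pivot hn f p : ℕ) + 1) (Function.update p (pivot hn f p) b)
          * 2 ^ (n - ((pivot hn f p : ℕ) + 1)) := by
    intro b
    unfold piz
    field_simp
  rw [hcardpiz (sig hn f p), hcardpiz (!(sig hn f p))]
  -- the fiber cardinality
  have hple : (pivot hn f p : ℕ) ≤ n := le_of_lt (pivot hn f p).isLt
  have hcardF : ((univ.filter (fun x : Fin n → Bool =>
      ∀ j : Fin n, (j : ℕ) < (pivot hn f p : ℕ) → x j = p j)).card : ℝ)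
      = 2 * 2 ^ (n - ((pivot hn f p : ℕ) + 1)) := by
    rw [card_prefix (pivot hn f p : ℕ) hple p]
    have : n - (pivot hn f p : ℕ) = (n - ((pivot hn f p : ℕ) + 1)) + 1 := by
      have := (pivot hn f p).isLt; omega
    rw [this]
    push_cast [pow_succ]
    ring
  rw [hcardF]
  have hDel := sig_del hn f p
  have hspec := pivot_spec hn hf p
  nlinarith [hD, hspec, hDel]

lemma main_count {n : ℕ} (hn : 0 < n) {f : (Fin n → Bool) → Bool} (hf : AlmostBalanced f) :
    2 / (3 * (n:ℝ)) * 2 ^ (n - 1)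
      ≤ ∑ x ∈ univ.filter (fun x : Fin n → Bool => f x = false),
          (if x (pivot hn f x) = sig hn f x then (1:ℝ) else -1) := by
  classical
  have h1 : ∑ x ∈ univ.filter (fun x : Fin n → Bool => f x = false),
      (if x (pivot hn f x) = sig hn f x then (1:ℝ) else -1)
      = ∑ x : Fin n → Bool, gfun hn f x := by
    rw [Finset.sum_filter]
    rfl
  rw [h1, ← Finset.sum_fiberwise univ (kap hn f) (gfun hn f)]
  have h3 : ∑ p : Fin n → Bool,
      ((univ.filter fun x : Fin n → Bool => kap hn f x = p).card : ℝ) = 2 ^ n := by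
    have h4 := Finset.sum_fiberwise (univ : Finset (Fin n → Bool)) (kap hn f)
      (fun _ => (1:ℝ))
    simp only [Finset.sum_const, nsmul_eq_mul, mul_one, Finset.card_univ] at h4
    rw [h4]
    simp [Fintype.card_fun]
  have h5 : ∀ p : Fin n → Bool,
      2 / (3 * (n:ℝ)) / 2 * ((univ.filter fun x : Fin n → Bool => kap hn f x = p).card : ℝ)
        ≤ ∑ x ∈ univ.filter (fun x : Fin n → Bool => kap hn f x = p), gfun hn f x :=
    fun p => fiber_bound hn hf p
  have hnn : n - 1 + 1 = n := by omega
  have hpow : (2:ℝ) ^ n = 2 ^ (n - 1) * 2 := by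
    conv_lhs => rw [← hnn]
    rw [pow_succ]
  calc 2 / (3 * (n:ℝ)) * 2 ^ (n - 1)
      = 2 / (3 * (n:ℝ)) / 2 * 2 ^ n := by
        rw [hpow]; ring
    _ = ∑ p : Fin n → Bool, 2 / (3 * (n:ℝ)) / 2
          * ((univ.filter fun x : Fin n → Bool => kap hn f x = p).card : ℝ) := by
        rw [← Finset.mul_sum, h3]
    _ ≤ ∑ p : Fin n → Bool,
          ∑ x ∈ univ.filter (fun x : Fin n → Bool => kap hn f x = p), gfun hn f x :=
        Finset.sum_le_sum (fun p _ => h5 p)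

lemma sum_pi_bool {n : ℕ} (g : Fin n → Bool → ℝ) :
    ∑ y : Fin n → Bool, ∏ j : Fin n, g j (y j) = ∏ j : Fin n, ∑ b : Bool, g j b := by
  classical
  rw [← Fintype.piFinset_univ, Finset.sum_prod_piFinset]

end Aux

/-- For `N ≥ 1`, `n ≥ 1` and an almost balanced `f`, on every allowed input
string the biased system `P⁰` boosts the probability that `f` evaluates to `0`
by at least `(2/(3n))·sin²(π/(4N))` compared to the product quantum system `P`. -/
theorem biased_system_boosts_f_zero (N n : ℕ) (hN : 1 ≤ N) (hn : 0 < n)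
    (f : (Fin n → Bool) → Bool) (hf : AlmostBalanced f) (u v : Fin n → ℕ)
    (huv : AllowedStr N u v) :
    ∑ x ∈ Finset.univ.filter (fun x : Fin n → Bool => f x = false),
        ∑ y : Fin n → Bool, Pbias N hn f false x y u v ≥
      (∑ x ∈ Finset.univ.filter (fun x : Fin n → Bool => f x = false),
        ∑ y : Fin n → Bool, Pprod N x y u v) + (2 / (3 * n)) * s2 N := by
  classical
  have hsum_prod : ∀ x : Fin n → Bool,
      ∑ y : Fin n → Bool, Pprod N x y u v = (1/2 : ℝ) ^ n := by
    intro x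
    unfold Pprod
    rw [sum_pi_bool (fun j b => Qbox N (x j) b (u j) (v j))]
    rw [Finset.prod_congr rfl (fun j _ => sum_Qbox N (x j) (u j) (v j)),
      Finset.prod_const, Finset.card_univ, Fintype.card_fin]
  have hsum_bias : ∀ x : Fin n → Bool,
      ∑ y : Fin n → Bool, Pbias N hn f false x y u v
      = (1/2 + (if x (pivot hn f x) = sig hn f x then s2 N else - s2 N))
          * (1/2 : ℝ) ^ (n - 1) := by
    intro x
    unfold Pbias
    simp only [Bool.xor_false]
    have hrepr : ∀ y : Fin n → Bool,
        Qbias N (sig hn f x) (x (pivot hn f x)) (y (pivot hn f x))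
            (u (pivot hn f x)) (v (pivot hn f x)) *
          ∏ j ∈ Finset.univ.erase (pivot hn f x), Qbox N (x j) (y j) (u j) (v j)
        = ∏ j : Fin n, (fun j b => if j = pivot hn f x then
              Qbias N (sig hn f x) (x (pivot hn f x)) b (u (pivot hn f x)) (v (pivot hn f x))
            else Qbox N (x j) b (u j) (v j)) j (y j) := by
      intro y
      rw [← Finset.mul_prod_erase univ _ (Finset.mem_univ (pivot hn f x))]
      congr 1
      · simp
      · apply Finset.prod_congr rfl
        intro j hj
        have hne : j ≠ pivot hn f x := (Finset.mem_erase.mp hj).1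
        simp [hne]
    rw [Finset.sum_congr rfl (fun y _ => hrepr y),
      sum_pi_bool (fun j b => if j = pivot hn f x then
        Qbias N (sig hn f x) (x (pivot hn f x)) b (u (pivot hn f x)) (v (pivot hn f x))
      else Qbox N (x j) b (u j) (v j)),
      ← Finset.mul_prod_erase univ _ (Finset.mem_univ (pivot hn f x))]
    have h1 : (∑ b : Bool, if pivot hn f x = pivot hn f x then
        Qbias N (sig hn f x) (x (pivot hn f x)) b (u (pivot hn f x)) (v (pivot hn f x))
      else Qbox N (x (pivot hn f x)) b (u (pivot hn f x)) (v (pivot hn f x)))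
        = 1/2 + (if x (pivot hn f x) = sig hn f x then s2 N else - s2 N) := by
      simp only [if_pos rfl]
      exact sum_Qbias N (sig hn f x) (x (pivot hn f x)) (u (pivot hn f x)) (v (pivot hn f x))
    rw [h1]
    have h2 : ∀ j ∈ Finset.univ.erase (pivot hn f x),
        (∑ b : Bool, if j = pivot hn f x then
          Qbias N (sig hn f x) (x (pivot hn f x)) b (u (pivot hn f x)) (v (pivot hn f x))
        else Qbox N (x j) b (u j) (v j)) = 1/2 := by
      intro j hj
      have hne : j ≠ pivot hn f x := (Finset.mem_erase.mp hj).1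
      simp only [if_neg hne]
      exact sum_Qbox N (x j) (u j) (v j)
    rw [Finset.prod_congr rfl h2, Finset.prod_const,
      Finset.card_erase_of_mem (Finset.mem_univ (pivot hn f x)),
      Finset.card_univ, Fintype.card_fin]
  have key : ∑ x ∈ Finset.univ.filter (fun x : Fin n → Bool => f x = false),
        ∑ y : Fin n → Bool, Pbias N hn f false x y u v
      = (∑ x ∈ Finset.univ.filter (fun x : Fin n → Bool => f x = false),
          ∑ y : Fin n → Bool, Pprod N x y u v)
        + s2 N * (1/2 : ℝ) ^ (n - 1)
            * ∑ x ∈ Finset.univ.filter (fun x : Fin n → Bool => f x = false),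
                (if x (pivot hn f x) = sig hn f x then (1:ℝ) else -1) := by
    rw [Finset.sum_congr rfl (fun x _ => hsum_bias x),
      Finset.sum_congr rfl (fun x _ => hsum_prod x),
      Finset.mul_sum, ← Finset.sum_add_distrib]
    apply Finset.sum_congr rfl
    intro x _
    have hpow : ((1:ℝ)/2) ^ n = (1/2) * (1/2) ^ (n - 1) := by
      conv_lhs => rw [show n = (n - 1) + 1 from by omega]
      rw [pow_succ]; ring
    rw [hpow]
    split_ifs <;> ring
  rw [ge_iff_le, key]
  have hE := main_count hn hf
  have hs2 : 0 ≤ s2 N := sq_nonneg _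
  have hpow2 : ((1:ℝ)/2) ^ (n - 1) * 2 ^ (n - 1) = 1 := by
    rw [← mul_pow]; norm_num
  have hmul : s2 N * (1/2 : ℝ) ^ (n - 1) * (2 / (3 * (n:ℝ)) * 2 ^ (n - 1))
      = 2 / (3 * (n:ℝ)) * s2 N := by
    linear_combination (s2 N * (2 / (3 * (n:ℝ)))) * hpow2
  have hstep : s2 N * (1/2 : ℝ) ^ (n - 1) * (2 / (3 * (n:ℝ)) * 2 ^ (n - 1))
      ≤ s2 N * (1/2 : ℝ) ^ (n - 1)
          * ∑ x ∈ Finset.univ.filter (fun x : Fin n → Bool => f x = false),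
              (if x (pivot hn f x) = sig hn f x then (1:ℝ) else -1) :=
    mul_le_mul_of_nonneg_left hE (by positivity)
  linarith
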